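/- For any M×Q complex matrix W, positive definite Hermitian Σ̂ ∈ ℂ^{M×M}, and σ² > 0, it holds that W (Wᴴ Σ̂ W + σ² I_Q)⁻¹ Wᴴ Σ̂ = (WWᴴ/σ² - (WWᴴ/σ⁴)(Σ̂⁻¹ + WWᴴ/σ²)⁻¹ WWᴴ) Σ̂; i.e., WΠ depends on W only through WWᴴ. -/

import Mathlib

open Matrix ComplexOrder

/-- for any `W ∈ ℂ^{M×Q}`, positive definite Hermitian `Σ̂` and `σ² > 0`,
`W (Wᴴ Σ̂ W + σ² I_Q)⁻¹ Wᴴ Σ̂ = (WWᴴ/σ² - (WWᴴ/σ⁴)(Σ̂⁻¹ + WWᴴ/σ²)⁻¹ WWᴴ) Σ̂`;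
i.e. `W Π` depends on `W` only through `W Wᴴ`. -/
theorem stmt10 {M Q : ℕ} (W : Matrix (Fin M) (Fin Q) ℂ)
    (S : Matrix (Fin M) (Fin M) ℂ) (hS : S.PosDef) (σ2 : ℝ) (hσ : 0 < σ2) :
    W * (Wᴴ * S * W + (σ2 : ℂ) • 1)⁻¹ * Wᴴ * S =
      ((σ2 : ℂ)⁻¹ • (W * Wᴴ) -
        (((σ2 : ℂ) ^ 2)⁻¹) • (W * Wᴴ * (S⁻¹ + (σ2 : ℂ)⁻¹ • (W * Wᴴ))⁻¹ * (W * Wᴴ))) * S := by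
  set s : ℂ := (σ2 : ℂ) with hs
  have hs0 : s ≠ 0 := by
    simp [hs, Complex.ofReal_eq_zero, hσ.ne']
  set G : Matrix (Fin M) (Fin M) ℂ := W * Wᴴ with hGdef
  set A : Matrix (Fin Q) (Fin Q) ℂ := Wᴴ * S * W + s • 1 with hAdef
  set B : Matrix (Fin M) (Fin M) ℂ := S⁻¹ + s⁻¹ • G with hBdef
  -- positivity facts
  have hGs : (s⁻¹ • G).PosSemidef := by
    have h : s⁻¹ • G = (((Real.sqrt σ2⁻¹ : ℝ) : ℂ) • W) * (((Real.sqrt σ2⁻¹ : ℝ) : ℂ) • W)ᴴ := by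
      rw [hGdef, conjTranspose_smul, Matrix.smul_mul, Matrix.mul_smul, smul_smul]
      congr 1
      rw [Complex.star_def, Complex.conj_ofReal, ← Complex.ofReal_mul,
        Real.mul_self_sqrt (by positivity), Complex.ofReal_inv]
    rw [h]
    exact posSemidef_self_mul_conjTranspose _
  have hsmul1 : ∀ {n : ℕ}, (s • (1 : Matrix (Fin n) (Fin n) ℂ)).PosDef := by
    intro n
    rw [show s • (1 : Matrix (Fin n) (Fin n) ℂ) = diagonal (fun _ => s) by
      ext i j; by_cases h : i = j <;> simp [h, diagonal, Matrix.one_apply]]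
    rw [posDef_diagonal_iff]
    intro i
    rw [hs]
    exact_mod_cast hσ
  have hB : B.PosDef := hS.inv.add_posSemidef hGs
  have hA : A.PosDef := Matrix.PosDef.posSemidef_add
    (hS.posSemidef.conjTranspose_mul_mul_same W) hsmul1
  have hSdet : IsUnit S.det := (Matrix.isUnit_iff_isUnit_det S).mp hS.isUnit
  have hBdet : IsUnit B.det := (Matrix.isUnit_iff_isUnit_det B).mp hB.isUnit
  have hAdet : IsUnit A.det := (Matrix.isUnit_iff_isUnit_det A).mp hA.isUnit
  set X : Matrix (Fin M) (Fin M) ℂ := B⁻¹ with hXdef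
  -- key : (s⁻¹ • (S*G) + 1) * X = S
  have hSB : S * B = s⁻¹ • (S * G) + 1 := by
    rw [hBdef, mul_add, Matrix.mul_nonsing_inv S hSdet, mul_smul_comm, add_comm]
  have key : (s⁻¹ • (S * G) + 1) * X = S := by
    rw [← hSB, hXdef, mul_assoc, Matrix.mul_nonsing_inv B hBdet, mul_one]
  -- C and its inverse
  set C : Matrix (Fin M) (Fin M) ℂ := G * S + s • 1 with hCdef
  have hC2 : C = s • (B * S) := by
    rw [hCdef, hBdef, add_mul, Matrix.nonsing_inv_mul S hSdet, smul_mul_assoc,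
      smul_add, smul_smul, mul_inv_cancel₀ hs0, one_smul, add_comm]
  set D : Matrix (Fin M) (Fin M) ℂ := s⁻¹ • (S⁻¹ * X) with hDdef
  have hCD : C * D = 1 := by
    rw [hC2, hDdef, smul_mul_assoc, mul_smul_comm, smul_smul, mul_inv_cancel₀ hs0, one_smul,
      mul_assoc, ← mul_assoc S, Matrix.mul_nonsing_inv S hSdet, one_mul, hXdef,
      Matrix.mul_nonsing_inv B hBdet]
  have hDC : D * C = 1 := mul_eq_one_comm.mp hCD
  have cancel : ∀ L R : Matrix (Fin M) (Fin M) ℂ, C * L = C * R → L = R := by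
    intro L R h
    calc L = (D * C) * L := by rw [hDC, one_mul]
    _ = D * (C * R) := by rw [mul_assoc, h]
    _ = (D * C) * R := by rw [mul_assoc]
    _ = R := by rw [hDC, one_mul]
  apply cancel
  -- left side : C * (W * A⁻¹ * Wᴴ * S) = G * S
  have hCW : C * W = W * A := by
    rw [hCdef, hAdef, hGdef]
    simp only [Matrix.add_mul, Matrix.mul_add, Matrix.smul_mul, Matrix.mul_smul,
      Matrix.one_mul, Matrix.mul_one, Matrix.mul_assoc]
  have hleft : C * (W * A⁻¹ * Wᴴ * S) = G * S := by
    calc C * (W * A⁻¹ * Wᴴ * S) = (C * W) * (A⁻¹ * (Wᴴ * S)) := by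
          simp only [Matrix.mul_assoc]
      _ = W * ((A * A⁻¹) * (Wᴴ * S)) := by rw [hCW]; simp only [Matrix.mul_assoc]
      _ = G * S := by
          rw [Matrix.mul_nonsing_inv A hAdet, Matrix.one_mul, hGdef, Matrix.mul_assoc]
  rw [hleft]
  -- right side
  have key4 : G * (S * G) = s⁻¹ • (G * (S * (G * (X * G)))) + G * (X * G) := by
    have h := congrArg (fun N => G * (N * G)) key
    simp only [add_mul, smul_mul_assoc, one_mul, mul_add, mul_smul_comm, mul_assoc] at h
    linear_combination (norm := module) -h
  have final : C * (s⁻¹ • G - (s ^ 2)⁻¹ • (G * X * G)) = G := by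
    have hss : (s ^ 2)⁻¹ = s⁻¹ * s⁻¹ := by rw [sq, mul_inv]
    rw [hss, hCdef]
    simp only [mul_sub, add_mul, sub_mul, mul_add, smul_mul_assoc, mul_smul_comm, smul_smul,
      one_mul, mul_one, smul_add, smul_sub, mul_assoc]
    rw [key4]
    match_scalars <;> field_simp <;> simp
  rw [← Matrix.mul_assoc, final]
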